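/- Let l be (M,m)-(restricted smooth, restricted strongly concave) on the sparse subdomain Ω_{2k}, with 0 < m ≤ M. Then for every pair of subsets S, T ⊆ [n] each of size at most k (with the maximizers β^(S) and β^(S∪{j}) for j ∈ T assumed to exist), it holds that 2M · Σ_{j∈T} f_S(j) ≥ ‖∇l(β^(S))_T‖₂² ≥ 2m · Σ_{j∈T} f_S(j). -/

import Mathlib

open scoped BigOperators

noncomputable section

abbrev Euc (n : ℕ) := EuclideanSpace ℝ (Fin n)

/-- Number of nonzero coordinates (the ℓ₀ "norm"). -/
def norm0 {n : ℕ} (x : Euc n) : ℕ := (Finset.univ.filter fun i => x i ≠ 0).card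

/-- `l` is (M,m)-(restricted smooth, restricted strongly concave) on the sparse
subdomain `Ω_r`, with gradient `g`. -/
def IsRSCSM {n : ℕ} (l : Euc n → ℝ) (g : Euc n → Euc n) (M m : ℝ) (r : ℕ) : Prop :=
  ∀ x y : Euc n, norm0 x ≤ r → norm0 y ≤ r → norm0 (x - y) ≤ r →
    (l y - l x - (inner ℝ (g x) (y - x) : ℝ) ≤ -(m / 2) * ‖y - x‖ ^ 2) ∧
    (-(M / 2) * ‖y - x‖ ^ 2 ≤ l y - l x - (inner ℝ (g x) (y - x) : ℝ))

/-- `x` is supported in the index set `S`. -/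
def SuppIn {n : ℕ} (S : Finset (Fin n)) (x : Euc n) : Prop := ∀ i, i ∉ S → x i = 0

/-- The support selection function `f(S) = l(β^(S)) - l(0)`. -/
def fsel {n : ℕ} (l : Euc n → ℝ) (B : Finset (Fin n) → Euc n) (S : Finset (Fin n)) : ℝ :=
  l (B S) - l 0

lemma norm0_le_of_suppIn {n : ℕ} {S : Finset (Fin n)} {x : Euc n} (h : SuppIn S x) :
    norm0 x ≤ S.card := by
  apply Finset.card_le_card
  intro i hi
  simp only [Finset.mem_filter, Finset.mem_univ, true_and] at hi
  by_contra hc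
  exact hi (h i hc)

lemma grad_zero_on_supp {n : ℕ} (l : Euc n → ℝ) (g : Euc n → Euc n)
    (hgrad : ∀ x, HasGradientAt l (g x) x)
    (B : Finset (Fin n) → Euc n)
    (hBsupp : ∀ S, SuppIn S (B S))
    (hBmax : ∀ S x, SuppIn S x → l x ≤ l (B S))
    (S : Finset (Fin n)) (j : Fin n) (hj : j ∈ S) :
    g (B S) j = 0 := by
  set x := B S with hx
  set e : Euc n := EuclideanSpace.single j (1:ℝ) with he
  have hcurve : HasDerivAt (fun t : ℝ => x + t • e) e 0 := by
    simpa using ((hasDerivAt_id (0:ℝ)).smul_const e).const_add x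
  have hfd : HasFDerivAt l ((InnerProductSpace.toDual ℝ (Euc n)) (g x))
      ((fun t : ℝ => x + t • e) 0) := by
    simpa using (hgrad x).hasFDerivAt
  have hcomp : HasDerivAt (fun t : ℝ => l (x + t • e)) (g x j) 0 := by
    have h := hfd.comp_hasDerivAt 0 hcurve
    have : ((InnerProductSpace.toDual ℝ (Euc n)) (g x)) e = g x j := by
      simp [he, InnerProductSpace.toDual_apply_apply, EuclideanSpace.inner_single_right]
    rw [this] at h
    exact h
  have hmax : IsLocalMax (fun t : ℝ => l (x + t • e)) 0 := by
    apply Filter.Eventually.of_forall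
    intro t
    simp only [zero_smul, add_zero]
    apply hBmax S
    intro i hi
    have hij : i ≠ j := fun hij => hi (hij ▸ hj)
    simp [he, hx, PiLp.add_apply, PiLp.smul_apply, EuclideanSpace.single_apply,
      hij, (hBsupp S) i hi]
  exact hmax.hasDerivAt_eq_zero hcomp

lemma term_lower {n k : ℕ} (l : Euc n → ℝ) (g : Euc n → Euc n) (M m : ℝ)
    (hm : 0 < m) (hmM : m ≤ M)
    (hl : IsRSCSM l g M m (2 * k))
    (B : Finset (Fin n) → Euc n)
    (hBsupp : ∀ S, SuppIn S (B S))
    (hBmax : ∀ S x, SuppIn S x → l x ≤ l (B S))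
    (S : Finset (Fin n)) (hS : S.card ≤ k) (hk : 1 ≤ k) (j : Fin n) (hj : j ∉ S) :
    (g (B S) j) ^ 2 ≤ 2 * M * (l (B (insert j S)) - l (B S)) := by
  have hM : 0 < M := lt_of_lt_of_le hm hmM
  set x := B S with hxdef
  set γ : ℝ := g x j with hγ
  set e : Euc n := EuclideanSpace.single j (1:ℝ) with he
  set y : Euc n := x + (γ / M) • e with hy
  have hsx : SuppIn S x := hBsupp S
  have hsy : SuppIn (insert j S) y := by
    intro i hi
    have hij : i ≠ j := fun hij => hi (hij ▸ Finset.mem_insert_self j S)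
    simp [hy, he, PiLp.add_apply, PiLp.smul_apply, EuclideanSpace.single_apply, hij,
      hsx i (fun h => hi (Finset.mem_insert_of_mem h))]
  have h1 : norm0 x ≤ 2 * k := le_trans (norm0_le_of_suppIn hsx) (by omega)
  have h2 : norm0 y ≤ 2 * k :=
    le_trans (norm0_le_of_suppIn hsy) (le_trans (Finset.card_insert_le j S) (by omega))
  have h3 : norm0 (x - y) ≤ 2 * k := by
    refine le_trans (norm0_le_of_suppIn (S := {j}) ?_) (by simp; omega)
    intro i hi
    have hij : i ≠ j := by simpa using hi
    simp [hy, he, PiLp.sub_apply, PiLp.add_apply, PiLp.smul_apply,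
      EuclideanSpace.single_apply, hij]
  have key := (hl x y h1 h2 h3).2
  have hyx : y - x = (γ / M) • e := by simp [hy]
  have hinner : (inner ℝ (g x) (y - x) : ℝ) = (γ / M) * γ := by
    rw [hyx, real_inner_smul_right]
    simp [he, EuclideanSpace.inner_single_right, hγ]
  have hnorm : ‖y - x‖ ^ 2 = (γ / M) ^ 2 := by
    rw [hyx, norm_smul]
    simp [he, EuclideanSpace.norm_single, abs_div, div_pow, sq_abs]
  rw [hinner, hnorm] at key
  have hley : l y ≤ l (B (insert j S)) := hBmax _ _ hsy
  have e1 : -(M / 2) * (γ / M) ^ 2 = -(γ ^ 2 / (2 * M)) := by field_simp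
  have e2 : (γ / M) * γ = γ ^ 2 / M := by ring
  rw [e1, e2] at key
  have h4 : γ ^ 2 / (2 * M) ≤ l (B (insert j S)) - l x := by
    have : γ ^ 2 / M - γ ^ 2 / (2 * M) = γ ^ 2 / (2 * M) := by field_simp; ring
    linarith [this]
  have := (div_le_iff₀ (by positivity : (0:ℝ) < 2 * M)).mp h4
  nlinarith [this]

lemma term_upper {n k : ℕ} (l : Euc n → ℝ) (g : Euc n → Euc n) (M m : ℝ)
    (hm : 0 < m) (hmM : m ≤ M)
    (hgrad : ∀ x, HasGradientAt l (g x) x)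
    (hl : IsRSCSM l g M m (2 * k))
    (B : Finset (Fin n) → Euc n)
    (hBsupp : ∀ S, SuppIn S (B S))
    (hBmax : ∀ S x, SuppIn S x → l x ≤ l (B S))
    (S : Finset (Fin n)) (hS : S.card ≤ k) (hk : 1 ≤ k) (j : Fin n) (hj : j ∉ S)
    (hgz : ∀ i ∈ S, g (B S) i = 0) :
    2 * m * (l (B (insert j S)) - l (B S)) ≤ (g (B S) j) ^ 2 := by
  set x := B S with hxdef
  set y : Euc n := B (insert j S) with hy
  set γ : ℝ := g x j with hγ
  have hsx : SuppIn S x := hBsupp S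
  have hsy : SuppIn (insert j S) y := hBsupp _
  have hsxy : SuppIn (insert j S) (x - y) := by
    intro i hi
    simp [PiLp.sub_apply, hsx i (fun h => hi (Finset.mem_insert_of_mem h)), hsy i hi]
  have hcard : (insert j S).card ≤ 2 * k :=
    le_trans (Finset.card_insert_le j S) (by omega)
  have h1 : norm0 x ≤ 2 * k := le_trans (norm0_le_of_suppIn hsx) (by omega)
  have h2 : norm0 y ≤ 2 * k := le_trans (norm0_le_of_suppIn hsy) hcard
  have h3 : norm0 (x - y) ≤ 2 * k := le_trans (norm0_le_of_suppIn hsxy) hcard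
  have key := (hl x y h1 h2 h3).1
  have hinner : (inner ℝ (g x) (y - x) : ℝ) = γ * y j := by
    rw [PiLp.inner_apply]
    rw [Finset.sum_eq_single j]
    · simp [hsx j hj, hγ, mul_comm]
    · intro i _ hij
      by_cases hiS : i ∈ S
      · simp [hgz i hiS]
      · have : y i = 0 := hsy i (by simp [hij, hiS])
        simp [PiLp.sub_apply, this, hsx i hiS]
    · simp
  have hnorm : (y j) ^ 2 ≤ ‖y - x‖ ^ 2 := by
    have : ‖y - x‖ ^ 2 = ∑ i, ((y - x) i) ^ 2 := by
      rw [← real_inner_self_eq_norm_sq, PiLp.inner_apply]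
      apply Finset.sum_congr rfl
      intro i _
      simp [RCLike.inner_apply, sq]
    rw [this]
    have hxj : x j = 0 := hsx j hj
    have : ((y - x) j) ^ 2 = (y j) ^ 2 := by simp [PiLp.sub_apply, hxj]
    rw [← this]
    exact Finset.single_le_sum (f := fun i => ((y - x) i) ^ 2)
      (fun i _ => sq_nonneg _) (Finset.mem_univ j)
  rw [hinner] at key
  have h5 : l y - l x ≤ γ * y j - (m / 2) * (y j) ^ 2 := by nlinarith [hnorm, key, hm]
  nlinarith [sq_nonneg (γ - m * y j),
    mul_le_mul_of_nonneg_left h5 (by linarith : (0:ℝ) ≤ 2 * m)]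

theorem stmt0 {n k : ℕ} (l : Euc n → ℝ) (g : Euc n → Euc n) (M m : ℝ)
    (hm : 0 < m) (hmM : m ≤ M)
    (hgrad : ∀ x, HasGradientAt l (g x) x)
    (hl : IsRSCSM l g M m (2 * k))
    (B : Finset (Fin n) → Euc n)
    (hB0 : B ∅ = 0)
    (hBsupp : ∀ S, SuppIn S (B S))
    (hBmax : ∀ S x, SuppIn S x → l x ≤ l (B S))
    (S T : Finset (Fin n)) (hS : S.card ≤ k) (hT : T.card ≤ k) :
    2 * M * (∑ j ∈ T, (fsel l B (insert j S) - fsel l B S)) ≥ ∑ j ∈ T, (g (B S) j) ^ 2 ∧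
    ∑ j ∈ T, (g (B S) j) ^ 2 ≥ 2 * m * (∑ j ∈ T, (fsel l B (insert j S) - fsel l B S)) := by
  have hgz : ∀ i ∈ S, g (B S) i = 0 := fun i hi =>
    grad_zero_on_supp l g hgrad B hBsupp hBmax S i hi
  have hterm : ∀ j ∈ T,
      (g (B S) j) ^ 2 ≤ 2 * M * (fsel l B (insert j S) - fsel l B S) ∧
      2 * m * (fsel l B (insert j S) - fsel l B S) ≤ (g (B S) j) ^ 2 := by
    intro j hjT
    have hk : 1 ≤ k := le_trans (Finset.one_le_card.mpr ⟨j, hjT⟩) hT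
    by_cases hj : j ∈ S
    · have hins : insert j S = S := Finset.insert_eq_self.mpr hj
      simp [hins, hgz j hj]
    · have hd : fsel l B (insert j S) - fsel l B S = l (B (insert j S)) - l (B S) := by
        simp only [fsel]; ring
      rw [hd]
      exact ⟨term_lower l g M m hm hmM hl B hBsupp hBmax S hS hk j hj,
             term_upper l g M m hm hmM hgrad hl B hBsupp hBmax S hS hk j hj hgz⟩
  constructor
  · rw [ge_iff_le, Finset.mul_sum]
    exact Finset.sum_le_sum fun j hj => (hterm j hj).1
  · rw [ge_iff_le, Finset.mul_sum]
    exact Finset.sum_le_sum fun j hj => (hterm j hj).2
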